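/- arXiv:2305.08608 — 2 statements merged into one kernel-verified Lean document; each statement's English description precedes it below -/
import Mathlib

section
/- Let A be a Schur ring over the infinite dihedral group D∞ such that Z = ⟨z⟩ is an A-subgroup and every basic set of A contained in Z is a singleton. Then every basic set of A is a singleton, i.e. A is the full group algebra F[D∞]. -/
open scoped BigOperators

/-- A Schur ring over the group `G` with coefficients in the field `F`, presented by its
partition into finite nonempty basic sets. -/
structure SchurRing (F : Type) [Field F] [CharZero F] (G : Type) [Group G] [DecidableEq G] where
  /-- the basic sets -/
  parts : Set (Finset G)
  nonempty : ∀ C ∈ parts, C.Nonempty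
  cover : ∀ g : G, ∃ C ∈ parts, g ∈ C
  eq_or_disjoint : ∀ C ∈ parts, ∀ D ∈ parts, C = D ∨ Disjoint C D
  one_mem : ({1} : Finset G) ∈ parts
  inv_mem : ∀ C ∈ parts, C.image (·⁻¹) ∈ parts
  mul_mem : ∀ C ∈ parts, ∀ D ∈ parts, ∃ S : Finset (Finset G),
    (↑S : Set (Finset G)) ⊆ parts ∧ ∃ coef : Finset G → F,
      (∑ g ∈ C, MonoidAlgebra.single g (1 : F)) * (∑ g ∈ D, MonoidAlgebra.single g (1 : F))
        = ∑ E ∈ S, coef E • ∑ g ∈ E, MonoidAlgebra.single g (1 : F)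

/-- A subset of `G` is an `A`-set if it is a union of basic sets of `A`. -/
def SchurRing.IsASet {F : Type} [Field F] [CharZero F] {G : Type} [Group G] [DecidableEq G]
    (A : SchurRing F G) (X : Set G) : Prop :=
  ∃ 𝒮 : Set (Finset G), 𝒮 ⊆ A.parts ∧ X = ⋃ C ∈ 𝒮, (C : Set G)

/-- The infinite dihedral group, realized as `DihedralGroup 0`. -/
abbrev Dinf : Type := DihedralGroup 0

/-- The generator `z` of infinite order. -/
def zz : Dinf := DihedralGroup.r 1

/-- The reflection `s` of order two. -/
def ss : Dinf := DihedralGroup.sr 0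

/- ---------- auxiliary lemmas ---------- -/

lemma cast_zmod0 (k : ℤ) : ((k : ZMod 0)) = k := rfl

lemma inv_r (i : ZMod 0) : (DihedralGroup.r i : Dinf)⁻¹ = DihedralGroup.r (-i) := rfl

lemma zz_zpow (k : ℤ) : zz ^ k = (DihedralGroup.r k : Dinf) := by
  cases k with
  | ofNat n =>
      rw [Int.ofNat_eq_natCast, zpow_natCast, zz, DihedralGroup.r_one_pow]
      rfl
  | negSucc n =>
      rw [zpow_negSucc, zz, DihedralGroup.r_one_pow, inv_r]
      congr 1

lemma r_mem_zpowers (i : ZMod 0) : (DihedralGroup.r i : Dinf) ∈ Subgroup.zpowers zz :=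
  ⟨i, zz_zpow i⟩

lemma sr_not_mem_zpowers (i : ZMod 0) :
    (DihedralGroup.sr i : Dinf) ∉ Subgroup.zpowers zz := by
  intro h
  rw [Subgroup.mem_zpowers_iff] at h
  obtain ⟨k, hk⟩ := h
  rw [zz_zpow] at hk
  exact absurd hk (by simp)

lemma not_isOfFinOrder_zz : ¬ IsOfFinOrder zz := by
  rw [← orderOf_eq_zero_iff]
  exact DihedralGroup.orderOf_r_one

lemma sumC_apply {F : Type} [Field F] [CharZero F] (C : Finset Dinf) (t : Dinf) :
    (∑ g ∈ C, MonoidAlgebra.single g (1 : F)).coeff t = if t ∈ C then 1 else 0 := by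
  classical
  rw [MonoidAlgebra.coeff_sum, Finsupp.finset_sum_apply]
  simp only [MonoidAlgebra.coeff_single, Finsupp.single_apply]
  rw [Finset.sum_ite_eq' C t (fun _ => (1 : F))]

section

variable {F : Type} [Field F] [CharZero F]

/-- The basic set of an element of an `A`-set is contained in the `A`-set. -/
lemma basic_subset_of_mem (A : SchurRing F Dinf) {X : Set Dinf} (hX : A.IsASet X)
    {C : Finset Dinf} (hC : C ∈ A.parts) {g : Dinf} (hg : g ∈ C) (hgX : g ∈ X) :
    (C : Set Dinf) ⊆ X := by
  obtain ⟨𝒮, h𝒮, rfl⟩ := hX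
  obtain ⟨D, hD𝒮, hgD⟩ := Set.mem_iUnion₂.1 hgX
  rcases A.eq_or_disjoint C hC D (h𝒮 hD𝒮) with h | h
  · intro u hu
    exact Set.mem_iUnion₂.2 ⟨D, hD𝒮, by rw [← h]; exact hu⟩
  · exact ((Finset.disjoint_left.1 h hg) (Finset.mem_coe.1 hgD)).elim

/-- key lemma: if `{a}` and `C` are basic and `a*x ∈ C` for some `x ∈ C`,
then left multiplication by `a` maps `C` into itself. -/
lemma key (A : SchurRing F Dinf) {C : Finset Dinf} (hC : C ∈ A.parts)
    {a : Dinf} (ha : ({a} : Finset Dinf) ∈ A.parts)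
    {x : Dinf} (hx : x ∈ C) (hax : a * x ∈ C) :
    ∀ t ∈ C, a * t ∈ C := by
  classical
  obtain ⟨S, hS, coef, heq⟩ := A.mul_mem _ ha _ hC
  have hinj : Function.Injective (fun g : Dinf => a * g) := fun u v h => by
    simpa using mul_left_cancel h
  have hL : (∑ g ∈ ({a} : Finset Dinf), MonoidAlgebra.single g (1 : F)) *
      (∑ g ∈ C, MonoidAlgebra.single g (1 : F))
      = ∑ g ∈ C.image (fun g => a * g), MonoidAlgebra.single g (1 : F) := by
    rw [Finset.sum_singleton, Finset.mul_sum, Finset.sum_image (fun u _ v _ h => hinj h)]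
    refine Finset.sum_congr rfl fun g _ => ?_
    rw [MonoidAlgebra.single_mul_single, one_mul]
  rw [hL] at heq
  set C' := C.image (fun g => a * g) with hC'
  -- evaluation of the RHS at a point of C
  have hval : ∀ u ∈ C, (if u ∈ C' then (1 : F) else 0)
      = (if C ∈ S then coef C else 0) := by
    intro u hu
    have hcongr : (∑ g ∈ C', MonoidAlgebra.single g (1 : F)).coeff u
        = (∑ E ∈ S, coef E • ∑ g ∈ E, MonoidAlgebra.single g (1 : F)).coeff u := by rw [heq]
    rw [sumC_apply] at hcongr
    rw [hcongr]
    rw [MonoidAlgebra.coeff_sum, Finsupp.finset_sum_apply]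
    have hterm : ∀ E ∈ S, (coef E • ∑ g ∈ E, MonoidAlgebra.single g (1 : F)).coeff u
        = if E = C then coef E else 0 := by
      intro E hE
      rw [MonoidAlgebra.coeff_smul_apply, sumC_apply, smul_eq_mul]
      by_cases hEC : E = C
      · subst hEC; simp [hu]
      · have huE : u ∉ E := by
          intro huE
          rcases A.eq_or_disjoint E (hS hE) C hC with h | h
          · exact hEC h
          · exact (Finset.disjoint_left.1 h) huE hu
        simp [huE, hEC]
    rw [Finset.sum_congr rfl hterm, Finset.sum_ite_eq' S C coef]
  have h1 : (if (a * x) ∈ C' then (1 : F) else 0) = (if C ∈ S then coef C else 0) :=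
    hval _ hax
  have haxC' : a * x ∈ C' := Finset.mem_image_of_mem _ hx
  rw [if_pos haxC'] at h1
  have hsub : C ⊆ C' := by
    intro t ht
    have h2 := hval t ht
    rw [← h1] at h2
    by_contra htC'
    rw [if_neg htC'] at h2
    exact one_ne_zero h2.symm
  have hcard : C'.card ≤ C.card := le_of_eq (Finset.card_image_of_injective _ hinj)
  have : C = C' := Finset.eq_of_subset_of_card_le hsub hcard
  intro t ht
  rw [this]
  exact Finset.mem_image_of_mem _ ht

end

/-- If `⟨z⟩` is an `A`-subgroup and every basic set contained in `⟨z⟩` is a singleton, then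
every basic set of `A` is a singleton, i.e. `A` is the full group algebra. -/
theorem stmt_6 (F : Type) [Field F] [CharZero F] (A : SchurRing F Dinf)
    (hZ : A.IsASet (Subgroup.zpowers zz : Subgroup Dinf))
    (hdisc : ∀ C ∈ A.parts, (C : Set Dinf) ⊆ (Subgroup.zpowers zz : Subgroup Dinf) →
      ∃ g : Dinf, C = {g}) :
    ∀ C ∈ A.parts, ∃ g : Dinf, C = {g} := by
  classical
  intro C hC
  by_cases hsub : (C : Set Dinf) ⊆ (Subgroup.zpowers zz : Subgroup Dinf)
  · exact hdisc C hC hsub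
  · by_contra hns
    push_neg at hns
    -- C has two distinct elements
    obtain ⟨x0, hx0⟩ := A.nonempty C hC
    have h2 : ∃ x ∈ C, ∃ y ∈ C, x ≠ y := by
      by_contra h
      push_neg at h
      exact hns x0 (Finset.eq_singleton_iff_unique_mem.2 ⟨hx0, fun y hy => h y hy x0 hx0⟩)
    obtain ⟨x, hx, y, hy, hxy⟩ := h2
    -- no element of C lies in ⟨z⟩
    have hnotZ : ∀ g ∈ C, g ∉ (Subgroup.zpowers zz : Subgroup Dinf) := by
      intro g hg hgZ
      exact hsub (basic_subset_of_mem A hZ hC hg hgZ)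
    -- hence x and y are reflections
    obtain ⟨i, rfl⟩ : ∃ i, x = DihedralGroup.sr i := by
      cases x with
      | r i => exact absurd (r_mem_zpowers i) (hnotZ _ hx)
      | sr i => exact ⟨i, rfl⟩
    obtain ⟨j, rfl⟩ : ∃ j, y = DihedralGroup.sr j := by
      cases y with
      | r j => exact absurd (r_mem_zpowers j) (hnotZ _ hy)
      | sr j => exact ⟨j, rfl⟩
    -- the shift
    set a : Dinf := DihedralGroup.r (i - j) with hadef
    have haxy : a * DihedralGroup.sr i = DihedralGroup.sr j := by
      rw [hadef, DihedralGroup.r_mul_sr]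
      congr 1
      ring
    -- {a} is basic
    have haZ : a ∈ (Subgroup.zpowers zz : Subgroup Dinf) := r_mem_zpowers _
    obtain ⟨D, hD, haD⟩ := A.cover a
    have hDZ : (D : Set Dinf) ⊆ (Subgroup.zpowers zz : Subgroup Dinf) :=
      basic_subset_of_mem A hZ hD haD haZ
    obtain ⟨g, hg⟩ := hdisc D hD hDZ
    have hga : g = a := by
      rw [hg] at haD; exact (Finset.mem_singleton.1 haD).symm
    have haparts : ({a} : Finset Dinf) ∈ A.parts := by
      rw [← hga, ← hg]; exact hD
    -- key lemma: a * C ⊆ C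
    have hkey : ∀ t ∈ C, a * t ∈ C := by
      refine key A hC haparts hx ?_
      rw [haxy]; exact hy
    have hane : a ≠ 1 := by
      rw [hadef, DihedralGroup.one_def]
      simp only [ne_eq, DihedralGroup.r.injEq]
      intro h
      exact hxy (by simp [sub_eq_zero.1 h])
    -- infinitely many elements of C
    have hmem : ∀ n : ℕ, a ^ n * DihedralGroup.sr i ∈ C := by
      intro n
      induction n with
      | zero => simpa using hx
      | succ n ih =>
          have := hkey _ ih
          rw [pow_succ', mul_assoc]
          exact this
    have hinj : Function.Injective (fun n : ℕ => a ^ n * DihedralGroup.sr i) := by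
      intro n l h
      simp only at h
      have h' : a ^ n = a ^ l := mul_right_cancel h
      obtain ⟨m, hm⟩ := Subgroup.mem_zpowers_iff.mp haZ
      have hmne : m ≠ 0 := by
        intro h0; rw [h0, zpow_zero] at hm; exact hane hm.symm
      have hfin : ¬ IsOfFinOrder a := by
        intro hfin
        obtain ⟨k, hk0, hk1⟩ := isOfFinOrder_iff_pow_eq_one.1 hfin
        rw [← hm, ← zpow_natCast, ← zpow_mul] at hk1
        have := injective_zpow_iff_not_isOfFinOrder.2 not_isOfFinOrder_zz
          (show zz ^ (m * (k : ℤ)) = zz ^ (0 : ℤ) by rw [hk1, zpow_zero])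
        rcases mul_eq_zero.1 this with h | h
        · exact hmne h
        · omega
      exact injective_pow_iff_not_isOfFinOrder.2 hfin h'
    exact absurd (Set.infinite_of_injective_forall_mem hinj
      (fun n => hmem n)) (Set.not_infinite.2 (C.finite_toSet))
end

section
/- Let A be a Schur ring over the infinite dihedral group D∞ such that Z = ⟨z⟩ is an A-subgroup, every basic set of A contained in Z is of the form {z^j, z^{−j}}, and the basic set of A containing s is {s, z^i s} for some odd integer i. Then for every j ∈ ℤ, the set {z^{i+j} s, z^{−j} s} is a basic set of A; consequently the basic sets of A are exactly the sets {z^j s, z^{i−j} s} for j ∈ ℤ together with the sets {z^j, z^{−j}} for j ∈ ℤ. -/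
open scoped BigOperators

section Help

lemma cast0_iff (x y : ℤ) : (Int.cast x : ZMod 0) = (Int.cast y : ZMod 0) ↔ x = y := by
  constructor
  · intro h
    have := (ZMod.intCast_eq_intCast_iff x y 0).1 h
    simpa [Int.ModEq] using this
  · rintro rfl; rfl

lemma zz_zpow_s9 (j : ℤ) : zz ^ j = DihedralGroup.r (Int.cast j : ZMod 0) := by
  induction j using Int.induction_on with
  | zero => simp
  | succ k ih => rw [zpow_add, ih, zpow_one]; show _ * DihedralGroup.r 1 = _; rw [DihedralGroup.r_mul_r]; simp
  | pred k ih =>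
      have : zz ^ (-(k:ℤ) - 1) = zz ^ (-(k:ℤ)) * zz⁻¹ := by rw [← zpow_neg_one, ← zpow_add]; ring_nf
      rw [this, ih]
      have hinv : (zz)⁻¹ = DihedralGroup.r (-1) := rfl
      rw [hinv, DihedralGroup.r_mul_r]; norm_cast

lemma zs (j : ℤ) : zz ^ j * ss = DihedralGroup.sr (Int.cast (-j : ℤ) : ZMod 0) := by
  rw [zz_zpow_s9]
  show DihedralGroup.r _ * DihedralGroup.sr 0 = _
  rw [DihedralGroup.r_mul_sr]
  congr 1
  simp

@[simp] lemma zs_inj {a b : ℤ} : zz ^ a * ss = zz ^ b * ss ↔ a = b := by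
  rw [zs, zs, DihedralGroup.sr.injEq, cast0_iff]; omega

@[simp] lemma zp_inj {a b : ℤ} : zz ^ a = zz ^ b ↔ a = b := by
  rw [zz_zpow_s9, zz_zpow_s9, DihedralGroup.r.injEq, cast0_iff]

@[simp] lemma zp_ne_zs (a b : ℤ) : zz ^ a ≠ zz ^ b * ss := by
  rw [zz_zpow_s9, zs]; simp

@[simp] lemma zs_ne_zp (a b : ℤ) : zz ^ a * ss ≠ zz ^ b := by
  rw [zs, zz_zpow_s9]; simp

lemma ss_eq : ss = zz ^ (0:ℤ) * ss := by rw [zpow_zero, one_mul]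

lemma zs_mul_ss (a : ℤ) : (zz ^ a * ss) * ss = zz ^ a := by
  have : ss * ss = 1 := rfl
  rw [mul_assoc, this, mul_one]

lemma zs_mul_zs (a b : ℤ) : (zz ^ a * ss) * (zz ^ b * ss) = zz ^ (a - b) := by
  rw [zs, zs, DihedralGroup.sr_mul_sr, zz_zpow_s9]
  congr 1
  push_cast; ring

lemma zp_mul_zs (a b : ℤ) : zz ^ a * (zz ^ b * ss) = zz ^ (a + b) * ss := by
  rw [← mul_assoc, ← zpow_add]

variable {F : Type} [Field F] [CharZero F] {G : Type} [Group G] [DecidableEq G]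

instance monoidAlgebraCoeFun : CoeFun (MonoidAlgebra F G) (fun _ => G → F) := ⟨fun x => x.coeff⟩

lemma part_eq (A : SchurRing F G) {C D : Finset G} (hC : C ∈ A.parts) (hD : D ∈ A.parts)
    {g : G} (hgC : g ∈ C) (hgD : g ∈ D) : C = D := by
  rcases A.eq_or_disjoint C hC D hD with h | h
  · exact h
  · exact absurd hgD (Finset.disjoint_left.1 h hgC)

lemma subset_of_isASet (A : SchurRing F G) {X : Set G} (hX : A.IsASet X) {C : Finset G}
    (hC : C ∈ A.parts) {g : G} (hg : g ∈ C) (hgX : g ∈ X) : (C : Set G) ⊆ X := by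
  obtain ⟨S, hS, rfl⟩ := hX
  obtain ⟨D, hD, hgD⟩ := Set.mem_iUnion₂.1 hgX
  have hCD : C = D := part_eq A hC (hS hD) hg hgD
  subst hCD
  exact fun x hx => Set.mem_iUnion₂.2 ⟨C, hD, hx⟩

lemma prod_struct (A : SchurRing F G) {C D : Finset G} (hC : C ∈ A.parts) (hD : D ∈ A.parts)
    {g : G}
    (hg : ((∑ x ∈ C, MonoidAlgebra.single x (1:F)) * ∑ x ∈ D, MonoidAlgebra.single x (1:F)) g ≠ 0) :
    ∃ E ∈ A.parts, g ∈ E ∧ ∀ h ∈ E,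
      ((∑ x ∈ C, MonoidAlgebra.single x (1:F)) * ∑ x ∈ D, MonoidAlgebra.single x (1:F)) h
        = ((∑ x ∈ C, MonoidAlgebra.single x (1:F)) * ∑ x ∈ D, MonoidAlgebra.single x (1:F)) g := by
  obtain ⟨S, hS, coef, heq⟩ := A.mul_mem C hC D hD
  have happ : ∀ h : G, ((∑ x ∈ C, MonoidAlgebra.single x (1:F)) * ∑ x ∈ D, MonoidAlgebra.single x (1:F)) h
      = ∑ E ∈ S, coef E * (if h ∈ E then 1 else 0) := by
    intro h
    rw [heq, MonoidAlgebra.coeff_sum, Finsupp.finset_sum_apply]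
    refine Finset.sum_congr rfl fun E _ => ?_
    rw [MonoidAlgebra.coeff_smul, Finsupp.smul_apply, MonoidAlgebra.coeff_sum, Finsupp.finset_sum_apply, smul_eq_mul]
    congr 1
    simp [Finsupp.single_apply]
  rw [happ] at hg
  obtain ⟨E, hE, hne⟩ := Finset.exists_ne_zero_of_sum_ne_zero hg
  have hgE : g ∈ E := by by_contra hg'; simp [hg'] at hne
  have key : ∀ x : G, x ∈ E → ((∑ x ∈ C, MonoidAlgebra.single x (1:F)) * ∑ x ∈ D, MonoidAlgebra.single x (1:F)) x = coef E := by
    intro x hx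
    rw [happ, Finset.sum_eq_single_of_mem E hE]
    · simp [hx]
    · intro E' hE' hne'
      have hdis : Disjoint E' E := by
        rcases A.eq_or_disjoint E' (hS hE') E (hS hE) with h' | h'
        · exact absurd h' hne'
        · exact h'
      have : x ∉ E' := Finset.disjoint_right.1 hdis hx
      simp [this]
  exact ⟨E, hS hE, hgE, fun h hh => by rw [key h hh, key g hgE]⟩

end Help

section Dinfy

variable {F : Type} [Field F] [CharZero F]

lemma ss_ne_zs {i : ℤ} (hi0 : i ≠ 0) : (ss : Dinf) ≠ zz ^ i * ss := by
  conv_lhs => rw [ss_eq]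
  simp only [ne_eq, zs_inj]
  omega

lemma two_apply (u v h : Dinf) :
    ((MonoidAlgebra.single u (1:F) + MonoidAlgebra.single v 1 : MonoidAlgebra F Dinf)) h
      = (if u = h then (1:F) else 0) + (if v = h then 1 else 0) := by
  show ((Finsupp.single u (1:F) + Finsupp.single v 1 : Dinf →₀ F)) h = _
  simp [Finsupp.add_apply, Finsupp.single_apply]

lemma four_apply (u v w x h : Dinf) :
    (((MonoidAlgebra.single u (1:F) + MonoidAlgebra.single v 1)
      + (MonoidAlgebra.single w 1 + MonoidAlgebra.single x 1) : MonoidAlgebra F Dinf)) h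
      = ((if u = h then (1:F) else 0) + (if v = h then 1 else 0))
        + ((if w = h then (1:F) else 0) + (if x = h then 1 else 0)) := by
  show (((Finsupp.single u (1:F) + Finsupp.single v 1)
      + (Finsupp.single w 1 + Finsupp.single x 1) : Dinf →₀ F)) h = _
  rw [Finsupp.add_apply, Finsupp.add_apply, Finsupp.add_apply]
  rw [Finsupp.single_apply, Finsupp.single_apply, Finsupp.single_apply, Finsupp.single_apply]

lemma two_mem {u v h : Dinf}
    (hh : ((MonoidAlgebra.single u (1:F) + MonoidAlgebra.single v 1 : MonoidAlgebra F Dinf)) h ≠ 0) :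
    h = u ∨ h = v := by
  by_contra hc
  push_neg at hc
  rw [two_apply, if_neg (Ne.symm hc.1), if_neg (Ne.symm hc.2)] at hh
  simp at hh

lemma four_mem {u v w x h : Dinf}
    (hh : (((MonoidAlgebra.single u (1:F) + MonoidAlgebra.single v 1)
      + (MonoidAlgebra.single w 1 + MonoidAlgebra.single x 1) : MonoidAlgebra F Dinf)) h ≠ 0) :
    h = u ∨ h = v ∨ h = w ∨ h = x := by
  by_contra hc
  push_neg at hc
  obtain ⟨c1, c2, c3, c4⟩ := hc
  rw [four_apply, if_neg (Ne.symm c1), if_neg (Ne.symm c2), if_neg (Ne.symm c3),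
    if_neg (Ne.symm c4)] at hh
  simp at hh

lemma prod_formula (i a : ℤ) (hi0 : i ≠ 0) (ha : a ≠ 0) :
    (∑ x ∈ ({zz ^ a, zz ^ (-a)} : Finset Dinf), MonoidAlgebra.single x (1:F)) *
      (∑ x ∈ ({ss, zz ^ i * ss} : Finset Dinf), MonoidAlgebra.single x (1:F))
    = (MonoidAlgebra.single (zz ^ a * ss) 1 + MonoidAlgebra.single (zz ^ (i + a) * ss) 1)
      + (MonoidAlgebra.single (zz ^ (-a) * ss) 1 + MonoidAlgebra.single (zz ^ (i - a) * ss) 1) := by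
  have h1 : (zz ^ a : Dinf) ≠ zz ^ (-a) := by simp only [ne_eq, zp_inj]; omega
  rw [Finset.sum_pair h1, Finset.sum_pair (ss_ne_zs hi0), add_mul, mul_add, mul_add]
  simp only [MonoidAlgebra.single_mul_single, one_mul, zp_mul_zs]
  rw [show a + i = i + a from add_comm a i, show -a + i = i - a by ring]

lemma singleton_formula (i k : ℤ) (hi0 : i ≠ 0) :
    (∑ x ∈ ({zz ^ k * ss} : Finset Dinf), MonoidAlgebra.single x (1:F)) *
      (∑ x ∈ ({ss, zz ^ i * ss} : Finset Dinf), MonoidAlgebra.single x (1:F))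
    = MonoidAlgebra.single (zz ^ k) 1 + MonoidAlgebra.single (zz ^ (k - i)) 1 := by
  rw [Finset.sum_singleton, Finset.sum_pair (ss_ne_zs hi0), mul_add]
  simp only [MonoidAlgebra.single_mul_single, one_mul, zs_mul_ss, zs_mul_zs]

lemma pairZ (A : SchurRing F Dinf)
    (hZ : A.IsASet (Subgroup.zpowers zz : Subgroup Dinf))
    (hsym : ∀ C ∈ A.parts, (C : Set Dinf) ⊆ (Subgroup.zpowers zz : Subgroup Dinf) →
      ∃ j : ℤ, C = {zz ^ j, zz ^ (-j)})
    (j : ℤ) : ({zz ^ j, zz ^ (-j)} : Finset Dinf) ∈ A.parts := by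
  obtain ⟨C, hC, hjC⟩ := A.cover (zz ^ j)
  have hzmem : zz ^ j ∈ ((Subgroup.zpowers zz : Subgroup Dinf) : Set Dinf) :=
    Subgroup.zpow_mem_zpowers zz j
  have hsub := subset_of_isASet A hZ hC hjC hzmem
  obtain ⟨k, rfl⟩ := hsym C hC hsub
  rcases Finset.mem_insert.1 hjC with h | h
  · rw [zp_inj] at h
    subst h; exact hC
  · rw [Finset.mem_singleton, zp_inj] at h
    have : ({zz ^ j, zz ^ (-j)} : Finset Dinf) = {zz ^ k, zz ^ (-k)} := by
      subst h; rw [neg_neg]; exact Finset.pair_comm _ _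
    rw [this]; exact hC

end Dinfy

section Main

variable {F : Type} [Field F] [CharZero F]

lemma no_singleton (A : SchurRing F Dinf)
    (hZ : A.IsASet (Subgroup.zpowers zz : Subgroup Dinf))
    (hsym : ∀ C ∈ A.parts, (C : Set Dinf) ⊆ (Subgroup.zpowers zz : Subgroup Dinf) →
      ∃ j : ℤ, C = {zz ^ j, zz ^ (-j)})
    (i : ℤ) (hi : Odd i) (hD : ({ss, zz ^ i * ss} : Finset Dinf) ∈ A.parts)
    (k : ℤ) : ({zz ^ k * ss} : Finset Dinf) ∉ A.parts := by
  intro hC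
  obtain ⟨m, hm⟩ := hi
  have hi0 : i ≠ 0 := by omega
  have hP := singleton_formula (F := F) i k hi0
  have hval : ((∑ x ∈ ({zz ^ k * ss} : Finset Dinf), MonoidAlgebra.single x (1:F)) *
      (∑ x ∈ ({ss, zz ^ i * ss} : Finset Dinf), MonoidAlgebra.single x (1:F))) (zz ^ k) = 1 := by
    rw [hP, two_apply, if_pos rfl, if_neg (by simp only [ne_eq, zp_inj]; omega)]
    norm_num
  obtain ⟨E, hE, hkE, hconst⟩ := prod_struct A hC hD (by rw [hval]; exact one_ne_zero)
  have hzmem : zz ^ k ∈ ((Subgroup.zpowers zz : Subgroup Dinf) : Set Dinf) :=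
    Subgroup.zpow_mem_zpowers zz k
  have hsub := subset_of_isASet A hZ hE hkE hzmem
  obtain ⟨n, rfl⟩ := hsym E hE hsub
  have hmem : ∀ h ∈ ({zz ^ n, zz ^ (-n)} : Finset Dinf), h = zz ^ k ∨ h = zz ^ (k - i) := by
    intro h hh
    have h0 : ((∑ x ∈ ({zz ^ k * ss} : Finset Dinf), MonoidAlgebra.single x (1:F)) *
        (∑ x ∈ ({ss, zz ^ i * ss} : Finset Dinf), MonoidAlgebra.single x (1:F))) h ≠ 0 := by
      rw [hconst h hh, hval]; exact one_ne_zero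
    rw [hP] at h0
    exact two_mem h0
  have h1 := hmem (zz ^ n) (Finset.mem_insert_self _ _)
  have h2 := hmem (zz ^ (-n)) (by simp)
  rw [zp_inj, zp_inj] at h1
  rw [zp_inj, zp_inj] at h2
  have hk3 : zz ^ k = zz ^ n ∨ zz ^ k = zz ^ (-n) := by
    rcases Finset.mem_insert.1 hkE with h | h
    · exact Or.inl h
    · exact Or.inr (Finset.mem_singleton.1 h)
  rw [zp_inj, zp_inj] at hk3
  by_cases hk0 : k = 0
  · -- secondary argument at zz ^ (k - i)
    subst hk0
    have hval2 : ((∑ x ∈ ({zz ^ (0:ℤ) * ss} : Finset Dinf), MonoidAlgebra.single x (1:F)) *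
        (∑ x ∈ ({ss, zz ^ i * ss} : Finset Dinf), MonoidAlgebra.single x (1:F))) (zz ^ ((0:ℤ) - i)) = 1 := by
      rw [hP, two_apply, if_neg (by simp only [ne_eq, zp_inj]; omega), if_pos rfl]
      norm_num
    obtain ⟨E', hE', hkE', hconst'⟩ := prod_struct A hC hD (by rw [hval2]; exact one_ne_zero)
    have hzmem' : zz ^ ((0:ℤ) - i) ∈ ((Subgroup.zpowers zz : Subgroup Dinf) : Set Dinf) :=
      Subgroup.zpow_mem_zpowers zz _
    have hsub' := subset_of_isASet A hZ hE' hkE' hzmem'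
    obtain ⟨p, rfl⟩ := hsym E' hE' hsub'
    have hmem' : ∀ h ∈ ({zz ^ p, zz ^ (-p)} : Finset Dinf), h = zz ^ (0:ℤ) ∨ h = zz ^ ((0:ℤ) - i) := by
      intro h hh
      have h0 : ((∑ x ∈ ({zz ^ (0:ℤ) * ss} : Finset Dinf), MonoidAlgebra.single x (1:F)) *
          (∑ x ∈ ({ss, zz ^ i * ss} : Finset Dinf), MonoidAlgebra.single x (1:F))) h ≠ 0 := by
        rw [hconst' h hh, hval2]; exact one_ne_zero
      rw [hP] at h0
      exact two_mem h0
    have g1 := hmem' (zz ^ p) (Finset.mem_insert_self _ _)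
    have g2 := hmem' (zz ^ (-p)) (by simp)
    have g3 : zz ^ ((0:ℤ) - i) = zz ^ p ∨ zz ^ ((0:ℤ) - i) = zz ^ (-p) := by
      rcases Finset.mem_insert.1 hkE' with h | h
      · exact Or.inl h
      · exact Or.inr (Finset.mem_singleton.1 h)
    rw [zp_inj, zp_inj] at g1
    rw [zp_inj, zp_inj] at g2
    rw [zp_inj, zp_inj] at g3
    omega
  · omega

end Main

section Main2

variable {F : Type} [Field F] [CharZero F]

lemma part1 (A : SchurRing F Dinf)
    (hZ : A.IsASet (Subgroup.zpowers zz : Subgroup Dinf))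
    (hsym : ∀ C ∈ A.parts, (C : Set Dinf) ⊆ (Subgroup.zpowers zz : Subgroup Dinf) →
      ∃ j : ℤ, C = {zz ^ j, zz ^ (-j)})
    (i : ℤ) (hi : Odd i) (hD : ({ss, zz ^ i * ss} : Finset Dinf) ∈ A.parts)
    (j : ℤ) : ({zz ^ (i + j) * ss, zz ^ (-j) * ss} : Finset Dinf) ∈ A.parts := by
  obtain ⟨m, hm⟩ := hi
  have hi0 : i ≠ 0 := by omega
  by_cases hj0 : j = 0
  · subst hj0
    have he : ({zz ^ (i + 0) * ss, zz ^ (-(0:ℤ)) * ss} : Finset Dinf) = {ss, zz ^ i * ss} := by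
      rw [add_zero, neg_zero, zpow_zero, one_mul]
      exact Finset.pair_comm _ _
    rw [he]; exact hD
  by_cases hij0 : i + j = 0
  · have he : ({zz ^ (i + j) * ss, zz ^ (-j) * ss} : Finset Dinf) = {ss, zz ^ i * ss} := by
      rw [hij0, show -j = i by omega, zpow_zero, one_mul]
    rw [he]; exact hD
  -- main case
  have hCj := pairZ A hZ hsym j
  have hCij := pairZ A hZ hsym (i + j)
  have hPj := prod_formula (F := F) i j hi0 hj0
  have hPij := prod_formula (F := F) i (i + j) hi0 hij0
  have hval1 : ((∑ x ∈ ({zz ^ j, zz ^ (-j)} : Finset Dinf), MonoidAlgebra.single x (1:F)) *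
      (∑ x ∈ ({ss, zz ^ i * ss} : Finset Dinf), MonoidAlgebra.single x (1:F)))
        (zz ^ (i + j) * ss) = 1 := by
    rw [hPj, four_apply, if_pos rfl,
      if_neg (by simp only [ne_eq, zs_inj]; omega),
      if_neg (by simp only [ne_eq, zs_inj]; omega),
      if_neg (by simp only [ne_eq, zs_inj]; omega)]
    norm_num
  obtain ⟨E, hE, hgE, hconst⟩ := prod_struct A hCj hD (by rw [hval1]; exact one_ne_zero)
  have hval2 : ((∑ x ∈ ({zz ^ (i + j), zz ^ (-(i + j))} : Finset Dinf), MonoidAlgebra.single x (1:F)) *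
      (∑ x ∈ ({ss, zz ^ i * ss} : Finset Dinf), MonoidAlgebra.single x (1:F)))
        (zz ^ (i + j) * ss) = 1 := by
    rw [hPij, four_apply, if_pos rfl,
      if_neg (by simp only [ne_eq, zs_inj]; omega),
      if_neg (by simp only [ne_eq, zs_inj]; omega),
      if_neg (by simp only [ne_eq, zs_inj]; omega)]
    norm_num
  obtain ⟨E', hE', hgE', hconst'⟩ := prod_struct A hCij hD (by rw [hval2]; exact one_ne_zero)
  have hEE' : E' = E := part_eq A hE' hE hgE' hgE
  subst hEE'
  have memXj : ∀ h ∈ E', h = zz ^ j * ss ∨ h = zz ^ (i + j) * ss ∨ h = zz ^ (-j) * ss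
      ∨ h = zz ^ (i - j) * ss := by
    intro h hh
    have h0 : ((∑ x ∈ ({zz ^ j, zz ^ (-j)} : Finset Dinf), MonoidAlgebra.single x (1:F)) *
        (∑ x ∈ ({ss, zz ^ i * ss} : Finset Dinf), MonoidAlgebra.single x (1:F))) h ≠ 0 := by
      rw [hconst h hh, hval1]; exact one_ne_zero
    rw [hPj] at h0
    rcases four_mem h0 with h1 | h1 | h1 | h1
    · exact Or.inl h1
    · exact Or.inr (Or.inl h1)
    · exact Or.inr (Or.inr (Or.inl h1))
    · exact Or.inr (Or.inr (Or.inr h1))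
  have memXij : ∀ h ∈ E', h = zz ^ (i + j) * ss ∨ h = zz ^ (i + (i + j)) * ss
      ∨ h = zz ^ (-(i + j)) * ss ∨ h = zz ^ (i - (i + j)) * ss := by
    intro h hh
    have h0 : ((∑ x ∈ ({zz ^ (i + j), zz ^ (-(i + j))} : Finset Dinf), MonoidAlgebra.single x (1:F)) *
        (∑ x ∈ ({ss, zz ^ i * ss} : Finset Dinf), MonoidAlgebra.single x (1:F))) h ≠ 0 := by
      rw [hconst' h hh, hval2]; exact one_ne_zero
    rw [hPij] at h0
    exact four_mem h0
  have hsub : ∀ h ∈ E', h = zz ^ (i + j) * ss ∨ h = zz ^ (-j) * ss := by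
    intro h hh
    rcases memXj h hh with h1 | h1 | h1 | h1
    · exfalso
      rcases memXij h hh with h2 | h2 | h2 | h2 <;> rw [h1, zs_inj] at h2 <;> omega
    · exact Or.inl h1
    · exact Or.inr h1
    · exfalso
      rcases memXij h hh with h2 | h2 | h2 | h2 <;> rw [h1, zs_inj] at h2 <;> omega
  by_cases hw : zz ^ (-j) * ss ∈ E'
  · have hpair : E' = {zz ^ (i + j) * ss, zz ^ (-j) * ss} := by
      apply Finset.Subset.antisymm
      · intro h hh
        rcases hsub h hh with h1 | h1 <;> simp [h1]
      · intro h hh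
        rcases Finset.mem_insert.1 hh with h1 | h1
        · subst h1; exact hgE
        · rw [Finset.mem_singleton] at h1; subst h1; exact hw
    rw [← hpair]; exact hE
  · exfalso
    apply no_singleton A hZ hsym i ⟨m, hm⟩ hD (i + j)
    have hsing : E' = {zz ^ (i + j) * ss} := by
      apply Finset.Subset.antisymm
      · intro h hh
        rcases hsub h hh with h1 | h1
        · simp [h1]
        · exact absurd (h1 ▸ hh) hw
      · simp [hgE]
    rw [← hsing]; exact hE

end Main2

lemma z_cases (g : Dinf) : (∃ a : ℤ, g = zz ^ a) ∨ (∃ a : ℤ, g = zz ^ a * ss) := by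
  cases g with
  | r x =>
      left
      refine ⟨(ZMod.cast x : ℤ), ?_⟩
      rw [zz_zpow_s9]
      congr 1
  | sr x =>
      right
      refine ⟨-(ZMod.cast x : ℤ), ?_⟩
      rw [zs, neg_neg]
      congr 1


/-- Suppose `⟨z⟩` is an `A`-subgroup, every basic set inside `⟨z⟩` has the form `{z^j, z^(-j)}`,
and the basic set containing `s` is `{s, z^i s}` with `i` odd. Then each `{z^(i+j) s, z^(-j) s}`
is a basic set, and the basic sets are exactly the sets `{z^j s, z^(i-j) s}` together with the
sets `{z^j, z^(-j)}`. -/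
theorem stmt_9 (F : Type) [Field F] [CharZero F] (A : SchurRing F Dinf)
    (hZ : A.IsASet (Subgroup.zpowers zz : Subgroup Dinf))
    (hsym : ∀ C ∈ A.parts, (C : Set Dinf) ⊆ (Subgroup.zpowers zz : Subgroup Dinf) →
      ∃ j : ℤ, C = {zz ^ j, zz ^ (-j)})
    (i : ℤ) (hi : Odd i) (hD : ({ss, zz ^ i * ss} : Finset Dinf) ∈ A.parts) :
    (∀ j : ℤ, ({zz ^ (i + j) * ss, zz ^ (-j) * ss} : Finset Dinf) ∈ A.parts) ∧
    A.parts =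
      {C : Finset Dinf | ∃ j : ℤ, C = {zz ^ j * ss, zz ^ (i - j) * ss}} ∪
      {C : Finset Dinf | ∃ j : ℤ, C = {zz ^ j, zz ^ (-j)}} := by
  refine ⟨part1 A hZ hsym i hi hD, ?_⟩
  have key : ∀ j : ℤ, ({zz ^ j * ss, zz ^ (i - j) * ss} : Finset Dinf) ∈ A.parts := by
    intro j
    have h := part1 A hZ hsym i hi hD (-j)
    have he : ({zz ^ (i + -j) * ss, zz ^ (-(-j)) * ss} : Finset Dinf)
        = {zz ^ j * ss, zz ^ (i - j) * ss} := by
      rw [neg_neg, show i + -j = i - j by ring]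
      exact Finset.pair_comm _ _
    rwa [he] at h
  ext C
  constructor
  · intro hC
    obtain ⟨g, hg⟩ := A.nonempty C hC
    rcases z_cases g with ⟨a, rfl⟩ | ⟨a, rfl⟩
    · right
      refine ⟨a, ?_⟩
      exact part_eq A hC (pairZ A hZ hsym a) hg (Finset.mem_insert_self _ _)
    · left
      refine ⟨a, ?_⟩
      exact part_eq A hC (key a) hg (Finset.mem_insert_self _ _)
  · intro hC
    rcases hC with ⟨j, rfl⟩ | ⟨j, rfl⟩
    · exact key j
    · exact pairZ A hZ hsym j
end
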